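/- Under the tilted measure P_{θ₁} (where the Xᵢ are i.i.d. with mean μ₁ = Ψ'(θ₁) > 0 and cumulant generating function θ ↦ Ψ(θ₁+θ) − Ψ(θ₁)), let t = ⌈b/μ₁ + b^{1/2} h(b)⌉ and T_b = inf{n : S_n ∉ [0,b)}. If r = μ₁² h(b) / (2 b^{1/2} sup_{0≤θ≤θ₁} Ψ''(θ)) satisfies r < θ₁ and μ₁ r − (sup_{0≤θ≤θ₁} Ψ''(θ)) r²/2 ≥ μ₁ r / 2, then P_{θ₁}(T_b > t) ≤ exp(−μ₁³ h(b)² / (8 sup_{0≤θ≤θ₁} Ψ''(θ))). -/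

import Mathlib

open MeasureTheory ProbabilityTheory Real

/-- Lemma 3.3: Under the tilted measure P_{θ₁} (X i.i.d. with mean
μ₁ = Ψ'(θ₁) > 0 and cumulant generating function θ ↦ Ψ(θ₁+θ) − Ψ(θ₁)), with
t = ⌈b/μ₁ + √b·h(b)⌉ and T_b the first exit time of S from [0,b): if
r = μ₁²h(b)/(2√b·K) (K = sup_{0≤θ≤θ₁} Ψ'') satisfies r < θ₁ and
μ₁r − Kr²/2 ≥ μ₁r/2, then P_{θ₁}(T_b > t) ≤ exp(−μ₁³h(b)²/(8K)). -/
theorem stmt11 {Ω : Type*} [MeasurableSpace Ω] (P : Measure Ω) [IsProbabilityMeasure P]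
    (Θ : Set ℝ) (hopen : IsOpen Θ) (hconv : Convex ℝ Θ)
    (Ψ Ψ' Ψ'' : ℝ → ℝ) (μ₀ μ₁ θ₁ b : ℝ) (h : ℝ → ℝ)
    (hsub : Set.Icc 0 θ₁ ⊆ Θ)
    (hderiv1 : ∀ θ ∈ Θ, HasDerivAt Ψ (Ψ' θ) θ)
    (hderiv2 : ∀ θ ∈ Θ, HasDerivAt Ψ' (Ψ'' θ) θ)
    (hpos : ∀ θ ∈ Θ, 0 < Ψ'' θ)
    (hcont : ContinuousOn Ψ'' (Set.Icc 0 θ₁))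
    (hΨ0 : Ψ 0 = 0) (hΨ'0 : Ψ' 0 = μ₀) (hμ₀ : μ₀ < 0)
    (hθ₁ : 0 < θ₁) (hΨθ₁ : Ψ θ₁ = 0) (hΨ'θ₁ : Ψ' θ₁ = μ₁) (hμ₁ : 0 < μ₁)
    (hb : 0 < b) (hhb : 0 < h b)
    (K : ℝ) (hK : K = sSup (Ψ'' '' Set.Icc 0 θ₁)) (hKpos : 0 < K)
    (r : ℝ) (hr : r = μ₁ ^ 2 * h b / (2 * Real.sqrt b * K))
    (hrθ₁ : r < θ₁) (hr2 : μ₁ * r / 2 ≤ μ₁ * r - K * r ^ 2 / 2)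
    (t : ℕ) (ht : t = ⌈b / μ₁ + Real.sqrt b * h b⌉₊)
    (X : ℕ → Ω → ℝ)
    (hmeas : ∀ i, Measurable (X i))
    (hindep : iIndepFun X P)
    (hident : ∀ i, Measure.map (X i) P = Measure.map (X 0) P)
    (hmgf : ∀ i, ∀ s : ℝ, θ₁ + s ∈ Θ → mgf (X i) P s = exp (Ψ (θ₁ + s) - Ψ θ₁))
    (S : ℕ → Ω → ℝ) (hS : ∀ n ω, S n ω = ∑ k ∈ Finset.range n, X k ω) :
    (P {ω | ∀ n : ℕ, 1 ≤ n → n ≤ t → S n ω ∈ Set.Ico 0 b}).toReal ≤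
      exp (-(μ₁ ^ 3 * (h b) ^ 2) / (8 * K)) := by
  have hsb : 0 < Real.sqrt b := Real.sqrt_pos.mpr hb
  have hrpos : 0 < r := by rw [hr]; positivity
  have hμr : 0 < μ₁ * r := mul_pos hμ₁ hrpos
  have hKub : ∀ θ ∈ Set.Icc 0 θ₁, Ψ'' θ ≤ K := by
    intro θ hθ
    rw [hK]
    exact le_csSup ((isCompact_Icc.image_of_continuousOn hcont).bddAbove)
      (Set.mem_image_of_mem _ hθ)
  have hmemIcc : ∀ s ∈ Set.Icc (0:ℝ) r, θ₁ - s ∈ Set.Icc 0 θ₁ := by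
    intro s hs
    exact ⟨by linarith [hs.2, hrθ₁.le], by linarith [hs.1]⟩
  have hmemΘ : ∀ s ∈ Set.Icc (0:ℝ) r, θ₁ - s ∈ Θ := fun s hs => hsub (hmemIcc s hs)
  -- Lemma A : μ₁ - Ψ'(θ₁ - s) ≤ K s on [0,r]
  have hA : ∀ s ∈ Set.Icc (0:ℝ) r, μ₁ - Ψ' (θ₁ - s) ≤ K * s := by
    have hg : ∀ s ∈ Set.Icc (0:ℝ) r,
        HasDerivAt (fun u => Ψ' (θ₁ - u) + K * u) (-Ψ'' (θ₁ - s) + K) s := by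
      intro s hs
      have h1 : HasDerivAt (fun u : ℝ => θ₁ - u) (-1) s := by
        simpa using (hasDerivAt_id s).const_sub θ₁
      have h2 : HasDerivAt (fun u : ℝ => Ψ' (θ₁ - u)) (-Ψ'' (θ₁ - s)) s := by
        have := (hderiv2 _ (hmemΘ s hs)).comp s h1
        exact this.congr_deriv (by ring)
      have h3 : HasDerivAt (fun u : ℝ => K * u) K s := by
        simpa using (hasDerivAt_id s).const_mul K
      exact h2.add h3
    have hmono : MonotoneOn (fun u => Ψ' (θ₁ - u) + K * u) (Set.Icc 0 r) := by
      apply monotoneOn_of_deriv_nonneg (convex_Icc 0 r)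
      · exact fun s hs => (hg s hs).continuousAt.continuousWithinAt
      · intro s hs
        rw [interior_Icc] at hs
        exact (hg s ⟨hs.1.le, hs.2.le⟩).differentiableAt.differentiableWithinAt
      · intro s hs
        rw [interior_Icc] at hs
        have hs' : s ∈ Set.Icc (0:ℝ) r := ⟨hs.1.le, hs.2.le⟩
        rw [(hg s hs').deriv]
        have := hKub _ (hmemIcc s hs')
        linarith
    intro s hs
    have h0 := hmono (Set.left_mem_Icc.mpr hrpos.le) hs hs.1
    simp only [sub_zero, mul_zero, add_zero, hΨ'θ₁] at h0
    linarith
  -- Lemma B : Ψ(θ₁ - r) ≤ -μ₁ r + K r²/2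
  have hB : Ψ (θ₁ - r) ≤ -(μ₁ * r) + K * r ^ 2 / 2 := by
    have hg : ∀ s ∈ Set.Icc (0:ℝ) r,
        HasDerivAt (fun u => Ψ (θ₁ - u) + μ₁ * u - K * u ^ 2 / 2)
          (-Ψ' (θ₁ - s) + μ₁ - K * s) s := by
      intro s hs
      have h1 : HasDerivAt (fun u : ℝ => θ₁ - u) (-1) s := by
        simpa using (hasDerivAt_id s).const_sub θ₁
      have h2 : HasDerivAt (fun u : ℝ => Ψ (θ₁ - u)) (-Ψ' (θ₁ - s)) s := by
        have := (hderiv1 _ (hmemΘ s hs)).comp s h1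
        exact this.congr_deriv (by ring)
      have h3 : HasDerivAt (fun u : ℝ => μ₁ * u) μ₁ s := by
        simpa using (hasDerivAt_id s).const_mul μ₁
      have h4 : HasDerivAt (fun u : ℝ => K * u ^ 2 / 2) (K * s) s := by
        have h5 := ((hasDerivAt_pow 2 s).const_mul K).div_const 2
        refine h5.congr_deriv ?_
        push_cast
        ring
      exact (h2.add h3).sub h4
    have hanti : AntitoneOn (fun u => Ψ (θ₁ - u) + μ₁ * u - K * u ^ 2 / 2) (Set.Icc 0 r) := by
      apply antitoneOn_of_deriv_nonpos (convex_Icc 0 r)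
      · exact fun s hs => (hg s hs).continuousAt.continuousWithinAt
      · intro s hs
        rw [interior_Icc] at hs
        exact (hg s ⟨hs.1.le, hs.2.le⟩).differentiableAt.differentiableWithinAt
      · intro s hs
        rw [interior_Icc] at hs
        have hs' : s ∈ Set.Icc (0:ℝ) r := ⟨hs.1.le, hs.2.le⟩
        rw [(hg s hs').deriv]
        have := hA s hs'
        linarith
    have h0 := hanti (Set.left_mem_Icc.mpr hrpos.le) (Set.right_mem_Icc.mpr hrpos.le) hrpos.le
    simp only [sub_zero, mul_zero, add_zero, hΨθ₁, pow_two] at h0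
    nlinarith [h0]
  have htpos : (0:ℝ) < b / μ₁ + Real.sqrt b * h b := by positivity
  have ht1 : 1 ≤ t := by
    rw [ht]
    exact Nat.one_le_iff_ne_zero.mpr (by
      simp only [ne_eq, Nat.ceil_eq_zero, not_le]
      linarith)
  have htge : b / μ₁ + Real.sqrt b * h b ≤ (t : ℝ) := by
    rw [ht]; exact Nat.le_ceil _
  have hΘmem : θ₁ + -r ∈ Θ := by
    have := hmemΘ r (Set.right_mem_Icc.mpr hrpos.le)
    simpa [sub_eq_add_neg] using this
  have hmgf_i : ∀ i, mgf (X i) P (-r) = exp (Ψ (θ₁ - r)) := by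
    intro i
    rw [hmgf i (-r) hΘmem, hΨθ₁, sub_zero, ← sub_eq_add_neg]
  have hint : ∀ i, Integrable (fun ω => exp ((-r) * X i ω)) P := by
    intro i
    by_contra hni
    have h0 : mgf (X i) P (-r) = 0 := by
      rw [mgf, integral_undef hni]
    rw [hmgf_i i] at h0
    exact (exp_pos _).ne' h0
  have hSsum : S t = ∑ k ∈ Finset.range t, X k := by
    funext ω; rw [hS]; simp
  have hintS : Integrable (fun ω => exp ((-r) * S t ω)) P := by
    rw [hSsum]
    exact hindep.integrable_exp_mul_sum hmeas (fun i _ => hint i)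
  have hchern := measure_le_le_exp_mul_mgf (μ := P) (X := S t) b (neg_nonpos.mpr hrpos.le) hintS
  have hmgfS : mgf (S t) P (-r) = exp ((t : ℝ) * Ψ (θ₁ - r)) := by
    rw [hSsum, hindep.mgf_sum hmeas]
    simp only [hmgf_i, Finset.prod_const, Finset.card_range]
    exact (Real.exp_nat_mul _ t).symm
  have hsubset : {ω | ∀ n : ℕ, 1 ≤ n → n ≤ t → S n ω ∈ Set.Ico 0 b} ⊆ {ω | S t ω ≤ b} := by
    intro ω hω
    exact ((hω t ht1 le_rfl).2).le
  have hmono := ENNReal.toReal_mono (measure_ne_top P _) (measure_mono hsubset)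
  refine hmono.trans (hchern.trans ?_)
  rw [hmgfS, ← Real.exp_add]
  apply Real.exp_le_exp.mpr
  have hΨneg : Ψ (θ₁ - r) ≤ -(μ₁ * r / 2) := by linarith
  have step1 : (t : ℝ) * Ψ (θ₁ - r) ≤ (b / μ₁ + Real.sqrt b * h b) * Ψ (θ₁ - r) :=
    mul_le_mul_of_nonpos_right htge (by linarith)
  have step2 : (b / μ₁ + Real.sqrt b * h b) * Ψ (θ₁ - r) ≤
      (b / μ₁) * (-(μ₁ * r) + K * r ^ 2 / 2) + (Real.sqrt b * h b) * (-(μ₁ * r / 2)) := by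
    have h1 : (b / μ₁) * Ψ (θ₁ - r) ≤ (b / μ₁) * (-(μ₁ * r) + K * r ^ 2 / 2) :=
      mul_le_mul_of_nonneg_left hB (by positivity)
    have h2 : (Real.sqrt b * h b) * Ψ (θ₁ - r) ≤ (Real.sqrt b * h b) * (-(μ₁ * r / 2)) :=
      mul_le_mul_of_nonneg_left hΨneg (by positivity)
    calc (b / μ₁ + Real.sqrt b * h b) * Ψ (θ₁ - r)
        = (b / μ₁) * Ψ (θ₁ - r) + (Real.sqrt b * h b) * Ψ (θ₁ - r) := by ring
      _ ≤ _ := add_le_add h1 h2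
  have hbsq : Real.sqrt b * Real.sqrt b = b := Real.mul_self_sqrt hb.le
  have key : r * b + ((b / μ₁) * (-(μ₁ * r) + K * r ^ 2 / 2)
      + (Real.sqrt b * h b) * (-(μ₁ * r / 2))) = -(μ₁ ^ 3 * (h b) ^ 2) / (8 * K) := by
    set u := Real.sqrt b with hu
    have hb2 : b = u * u := hbsq.symm
    rw [hr, hb2]
    have hu0 : u ≠ 0 := hsb.ne'
    field_simp
    ring
  linarith [step1.trans step2]
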